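/- Let r_X, r_Y : [0,∞) → ℝ be continuous and strictly positive failure rates. (i) The geometric aging intensity order X ≤_GAI Y (i.e., r_X(t)/exp((1/t)∫₀ᵗ ln r_X) ≥ r_Y(t)/exp((1/t)∫₀ᵗ ln r_Y) for all t > 0) holds if and only if ln(r_X(t)/r_Y(t)) ≥ (1/t)∫₀ᵗ ln(r_X(u)/r_Y(u)) du for all t > 0. (ii) If t ↦ ln(r_X(t)/r_Y(t)) is monotone non-decreasing on (0,∞) (in particular, if X is aging faster than Y, i.e., t ↦ r_X(t)/r_Y(t) is non-decreasing), then X ≤_GAI Y. -/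

import Mathlib

theorem GAI_order_characterization_and_AF_sufficient
    (rX rY : ℝ → ℝ)
    (hXc : ContinuousOn rX (Set.Ici 0)) (hYc : ContinuousOn rY (Set.Ici 0))
    (hXpos : ∀ u ∈ Set.Ici (0 : ℝ), 0 < rX u)
    (hYpos : ∀ u ∈ Set.Ici (0 : ℝ), 0 < rY u) :
    ((∀ t > (0:ℝ),
        rY t / Real.exp ((1 / t) * ∫ u in (0:ℝ)..t, Real.log (rY u)) ≤
          rX t / Real.exp ((1 / t) * ∫ u in (0:ℝ)..t, Real.log (rX u))) ↔
      ∀ t > (0:ℝ),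
        (1 / t) * ∫ u in (0:ℝ)..t, Real.log (rX u / rY u) ≤
          Real.log (rX t / rY t)) ∧
    (MonotoneOn (fun t => Real.log (rX t / rY t)) (Set.Ioi 0) →
      ∀ t > (0:ℝ),
        rY t / Real.exp ((1 / t) * ∫ u in (0:ℝ)..t, Real.log (rY u)) ≤
          rX t / Real.exp ((1 / t) * ∫ u in (0:ℝ)..t, Real.log (rX u))) := by
  have hlogX : ContinuousOn (fun u => Real.log (rX u)) (Set.Ici 0) :=
    Real.continuousOn_log.comp hXc (fun u hu => (hXpos u hu).ne')
  have hlogY : ContinuousOn (fun u => Real.log (rY u)) (Set.Ici 0) :=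
    Real.continuousOn_log.comp hYc (fun u hu => (hYpos u hu).ne')
  have huIcc : ∀ t > (0:ℝ), Set.uIcc (0:ℝ) t = Set.Icc 0 t := fun t ht =>
    Set.uIcc_of_le ht.le
  have iX : ∀ t > (0:ℝ), IntervalIntegrable (fun u => Real.log (rX u)) MeasureTheory.volume 0 t := by
    intro t ht
    apply ContinuousOn.intervalIntegrable
    rw [huIcc t ht]
    exact hlogX.mono (fun u hu => hu.1)
  have iY : ∀ t > (0:ℝ), IntervalIntegrable (fun u => Real.log (rY u)) MeasureTheory.volume 0 t := by
    intro t ht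
    apply ContinuousOn.intervalIntegrable
    rw [huIcc t ht]
    exact hlogY.mono (fun u hu => hu.1)
  have hsub : ∀ t > (0:ℝ), (∫ u in (0:ℝ)..t, Real.log (rX u / rY u)) =
      (∫ u in (0:ℝ)..t, Real.log (rX u)) - ∫ u in (0:ℝ)..t, Real.log (rY u) := by
    intro t ht
    rw [← intervalIntegral.integral_sub (iX t ht) (iY t ht)]
    apply intervalIntegral.integral_congr
    intro u hu
    rw [huIcc t ht] at hu
    exact Real.log_div (hXpos u hu.1).ne' (hYpos u hu.1).ne'
  have key : ∀ t > (0:ℝ),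
      ((rY t / Real.exp ((1 / t) * ∫ u in (0:ℝ)..t, Real.log (rY u)) ≤
          rX t / Real.exp ((1 / t) * ∫ u in (0:ℝ)..t, Real.log (rX u))) ↔
        ((1 / t) * ∫ u in (0:ℝ)..t, Real.log (rX u / rY u) ≤
          Real.log (rX t / rY t))) := by
    intro t ht
    have hX : 0 < rX t := hXpos t ht.le
    have hY : 0 < rY t := hYpos t ht.le
    rw [div_le_div_iff₀ (Real.exp_pos _) (Real.exp_pos _),
      ← Real.log_le_log_iff (by positivity) (by positivity),
      Real.log_mul hY.ne' (Real.exp_ne_zero _),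
      Real.log_mul hX.ne' (Real.exp_ne_zero _),
      Real.log_exp, Real.log_exp, Real.log_div hX.ne' hY.ne', hsub t ht, mul_sub]
    constructor <;> intro h <;> linarith
  constructor
  · exact forall_congr' fun t => forall_congr' fun ht => key t ht
  · intro hm t ht
    rw [key t ht]
    have hint : IntervalIntegrable (fun u => Real.log (rX u / rY u)) MeasureTheory.volume 0 t := by
      rw [intervalIntegrable_iff_integrableOn_Ioc_of_le ht.le] at *
      have := (iX t ht).sub (iY t ht)
      rw [intervalIntegrable_iff_integrableOn_Ioc_of_le ht.le] at this
      apply this.congr_fun ?_ measurableSet_Ioc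
      intro u hu
      exact (Real.log_div (hXpos u hu.1.le).ne' (hYpos u hu.1.le).ne').symm
    have hbound : (∫ u in (0:ℝ)..t, Real.log (rX u / rY u)) ≤ t * Real.log (rX t / rY t) := by
      rw [intervalIntegral.integral_of_le ht.le]
      have h1 : ∫ u in Set.Ioc 0 t, Real.log (rX u / rY u) ≤
          ∫ _ in Set.Ioc 0 t, Real.log (rX t / rY t) := by
        apply MeasureTheory.setIntegral_mono_on
        · rw [intervalIntegrable_iff_integrableOn_Ioc_of_le ht.le] at hint
          exact hint
        · exact MeasureTheory.integrableOn_const (by simp [Real.volume_Ioc])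
        · exact measurableSet_Ioc
        · intro u hu
          exact hm (Set.mem_Ioi.mpr hu.1) (Set.mem_Ioi.mpr ht) hu.2
      rw [MeasureTheory.setIntegral_const, Real.volume_real_Ioc_of_le ht.le] at h1
      simpa using h1
    calc (1 / t) * ∫ u in (0:ℝ)..t, Real.log (rX u / rY u)
        ≤ (1 / t) * (t * Real.log (rX t / rY t)) := by
          apply mul_le_mul_of_nonneg_left hbound (by positivity)
      _ = Real.log (rX t / rY t) := by field_simp
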